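/- Let ℓ ≥ 1 and let M₁, M₂, M₃ be real symmetric positive semidefinite ℓ×ℓ matrices such that every element of B(M₁,M₂,M₃) has rank at least φ(ℓ). Then every element of the feasible set F(M₁,M₂,M₃) has rank at least 3ℓ + φ(ℓ). -/

import Mathlib

open Matrix

noncomputable section

/-- The `3ℓ×ℓ` block matrix `[I_ℓ; I_ℓ; −I_ℓ]`. -/
def Wmat (l : ℕ) : Matrix (Fin (3*l)) (Fin l) ℝ :=
  Matrix.of fun i j =>
    (if (i : ℕ) = (j : ℕ) then 1 else 0) + (if (i : ℕ) = l + (j : ℕ) then 1 else 0)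
      - (if (i : ℕ) = 2*l + (j : ℕ) then 1 else 0)

/-- Membership in the set `B(M₁,M₂,M₃)`. -/
def Bset (l : ℕ) (M1 M2 M3 : Matrix (Fin l) (Fin l) ℝ)
    (X : Matrix (Fin (3*l)) (Fin (3*l)) ℝ) : Prop :=
  X.PosSemidef ∧
  (∀ i j : Fin l, X ⟨(i : ℕ), by omega⟩ ⟨(j : ℕ), by omega⟩ = M1 i j) ∧
  (∀ i j : Fin l, X ⟨l + (i : ℕ), by omega⟩ ⟨l + (j : ℕ), by omega⟩ = M2 i j) ∧
  (∀ i j : Fin l, X ⟨2*l + (i : ℕ), by omega⟩ ⟨2*l + (j : ℕ), by omega⟩ = M3 i j) ∧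
  (Wmat l)ᵀ * X * (Wmat l) = 0

/-- The `6ℓ×ℓ` block matrix `V = [−I_ℓ; −I_ℓ; −I_ℓ; I_ℓ; I_ℓ; −I_ℓ]`. -/
def Vmat (l : ℕ) : Matrix (Fin (6*l)) (Fin l) ℝ :=
  Matrix.of fun i j =>
    -(if (i : ℕ) = (j : ℕ) then 1 else 0) - (if (i : ℕ) = l + (j : ℕ) then 1 else 0)
    - (if (i : ℕ) = 2*l + (j : ℕ) then 1 else 0) + (if (i : ℕ) = 3*l + (j : ℕ) then 1 else 0)
    + (if (i : ℕ) = 4*l + (j : ℕ) then 1 else 0) - (if (i : ℕ) = 5*l + (j : ℕ) then 1 else 0)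

/-- Membership in the feasible set `F(M₁,M₂,M₃)`. -/
def Fset (l : ℕ) (M1 M2 M3 : Matrix (Fin l) (Fin l) ℝ)
    (X : Matrix (Fin (6*l)) (Fin (6*l)) ℝ) : Prop :=
  X.PosSemidef ∧
  (∀ i j : Fin (3*l), X ⟨(i : ℕ), by omega⟩ ⟨(j : ℕ), by omega⟩ = if i = j then (1:ℝ) else 0) ∧
  (∀ (i : Fin l) (j : Fin (2*l)), X ⟨3*l + (i : ℕ), by omega⟩ ⟨l + (j : ℕ), by omega⟩ = 0) ∧
  (∀ i j : Fin l, X ⟨4*l + (i : ℕ), by omega⟩ ⟨(j : ℕ), by omega⟩ = 0) ∧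
  (∀ i j : Fin l, X ⟨4*l + (i : ℕ), by omega⟩ ⟨2*l + (j : ℕ), by omega⟩ = 0) ∧
  (∀ (i : Fin l) (j : Fin (2*l)), X ⟨5*l + (i : ℕ), by omega⟩ ⟨(j : ℕ), by omega⟩ = 0) ∧
  (∀ i j : Fin l, X ⟨3*l + (i : ℕ), by omega⟩ ⟨3*l + (j : ℕ), by omega⟩
      = (if i = j then (1:ℝ) else 0) + M1 i j) ∧
  (∀ i j : Fin l, X ⟨4*l + (i : ℕ), by omega⟩ ⟨4*l + (j : ℕ), by omega⟩
      = (if i = j then (1:ℝ) else 0) + M2 i j) ∧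
  (∀ i j : Fin l, X ⟨5*l + (i : ℕ), by omega⟩ ⟨5*l + (j : ℕ), by omega⟩
      = (if i = j then (1:ℝ) else 0) + M3 i j) ∧
  (Vmat l)ᵀ * X * (Vmat l) = 0

/-- Feasibility predicate for the set in Definition of `φ`. -/
def phiFeas (l : ℕ) (U : Matrix (Fin (2*l)) (Fin l) ℝ)
    (M : Matrix (Fin l) (Fin l) ℝ)
    (Y : Matrix (Fin (2*l)) (Fin (2*l)) ℝ) : Prop :=
  Y.PosSemidef ∧ Uᵀ * Y * U = M ∧
  (∀ i j : Fin l, Y ⟨(i : ℕ), by omega⟩ ⟨(j : ℕ), by omega⟩ = if i = j then (1:ℝ) else 0) ∧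
  (∀ i j : Fin l, Y ⟨l + (i : ℕ), by omega⟩ ⟨l + (j : ℕ), by omega⟩ = if i = j then (1:ℝ) else 0)

/-- `φ(ℓ)`. -/
def phi (l : ℕ) : ℕ :=
  sInf {k : ℕ |
    ∀ (U : Matrix (Fin (2*l)) (Fin l) ℝ) (M : Matrix (Fin l) (Fin l) ℝ),
      M.IsSymm → (∃ Y, phiFeas l U M Y) → ∃ Y, phiFeas l U M Y ∧ Y.rank ≤ k}


section Helpers

lemma sum_mul_ite_eq' {n : ℕ} (f : Fin n → ℝ) (c : ℕ) (hc : c < n) :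
    ∑ k : Fin n, f k * (if (k : ℕ) = c then (1:ℝ) else 0) = f ⟨c, hc⟩ := by
  have h : ∀ k : Fin n, ((k : ℕ) = c) = (k = ⟨c, hc⟩) := fun k => by
    simp [Fin.ext_iff]
  simp_rw [h, mul_ite, mul_one, mul_zero]
  simp

lemma finrank_submodule_prod' {R M N : Type*} [DivisionRing R] [AddCommGroup M] [AddCommGroup N]
    [Module R M] [Module R N] [FiniteDimensional R M] [FiniteDimensional R N]
    (p : Submodule R M) (q : Submodule R N) :
    Module.finrank R (p.prod q) = Module.finrank R p + Module.finrank R q := by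
  have e : (p.prod q) ≃ₗ[R] p × q :=
    { toFun := fun x => (⟨x.1.1, x.2.1⟩, ⟨x.1.2, x.2.2⟩)
      invFun := fun x => ⟨(x.1.1, x.2.1), ⟨x.1.2, x.2.2⟩⟩
      map_add' := fun _ _ => rfl
      map_smul' := fun _ _ => rfl
      left_inv := fun _ => rfl
      right_inv := fun _ => rfl }
  rw [e.finrank_eq, Module.finrank_prod]

lemma rank_fromBlocks_one_zero_zero' {n m : Type*} [Fintype n] [Fintype m] [DecidableEq n]
    [DecidableEq m] (S : Matrix m m ℝ) :
    (Matrix.fromBlocks (1 : Matrix n n ℝ) 0 0 S).rank = Fintype.card n + S.rank := by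
  classical
  set e := LinearEquiv.sumArrowLequivProdArrow n m ℝ ℝ with he
  have hcomp : (Matrix.fromBlocks (1 : Matrix n n ℝ) 0 0 S).mulVecLin
      = (e.symm.toLinearMap.comp ((LinearMap.id.prodMap S.mulVecLin).comp e.toLinearMap)) := by
    apply LinearMap.ext; intro v
    simp only [Matrix.mulVecLin_apply, LinearMap.comp_apply, LinearEquiv.coe_coe]
    rw [Matrix.fromBlocks_mulVec]
    funext i
    cases i <;>
      simp [e, LinearEquiv.sumArrowLequivProdArrow, Equiv.sumArrowEquivProdArrow,
        Matrix.one_mulVec, Matrix.zero_mulVec]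
  have hrange : LinearMap.range (LinearMap.id.prodMap S.mulVecLin :
        ((n → ℝ) × (m → ℝ)) →ₗ[ℝ] _)
      = (⊤ : Submodule ℝ (n → ℝ)).prod (LinearMap.range S.mulVecLin) := by
    ext x
    constructor
    · rintro ⟨y, rfl⟩
      exact ⟨trivial, ⟨y.2, rfl⟩⟩
    · rintro ⟨-, ⟨y, hy⟩⟩
      exact ⟨(x.1, y), by simp [hy, Prod.ext_iff]⟩
  have hmid : LinearMap.range ((LinearMap.id.prodMap S.mulVecLin).comp e.toLinearMap)
      = LinearMap.range (LinearMap.id.prodMap S.mulVecLin) :=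
    LinearMap.range_comp_of_range_eq_top _ (LinearEquiv.range e)
  rw [Matrix.rank, hcomp, LinearMap.range_comp, hmid, hrange,
    LinearEquiv.finrank_map_eq, finrank_submodule_prod', finrank_top]
  simp [Module.finrank_fintype_fun_eq_card, Matrix.rank]

lemma mul_Wmat_apply {l : ℕ} (S : Matrix (Fin (3*l)) (Fin (3*l)) ℝ) (p : Fin (3*l)) (q : Fin l) :
    (S * Wmat l) p q
      = S p ⟨(q:ℕ), by omega⟩ + S p ⟨l+(q:ℕ), by omega⟩ - S p ⟨2*l+(q:ℕ), by omega⟩ := by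
  rw [Matrix.mul_apply]
  simp only [Wmat, Matrix.of_apply, mul_add, mul_sub]
  rw [Finset.sum_sub_distrib, Finset.sum_add_distrib,
    sum_mul_ite_eq' (fun k => S p k) (q:ℕ) (by omega),
    sum_mul_ite_eq' (fun k => S p k) (l+(q:ℕ)) (by omega),
    sum_mul_ite_eq' (fun k => S p k) (2*l+(q:ℕ)) (by omega)]

lemma mul_Vmat_apply {l : ℕ} (X : Matrix (Fin (6*l)) (Fin (6*l)) ℝ) (p : Fin (6*l)) (q : Fin l) :
    (X * Vmat l) p q
      = -X p ⟨(q:ℕ), by omega⟩ - X p ⟨l+(q:ℕ), by omega⟩ - X p ⟨2*l+(q:ℕ), by omega⟩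
        + X p ⟨3*l+(q:ℕ), by omega⟩ + X p ⟨4*l+(q:ℕ), by omega⟩ - X p ⟨5*l+(q:ℕ), by omega⟩ := by
  rw [Matrix.mul_apply]
  simp only [Vmat, Matrix.of_apply, mul_add, mul_sub, mul_neg]
  rw [Finset.sum_sub_distrib, Finset.sum_add_distrib, Finset.sum_add_distrib,
    Finset.sum_sub_distrib, Finset.sum_sub_distrib, Finset.sum_neg_distrib,
    sum_mul_ite_eq' (fun k => X p k) ((q:ℕ)) (by omega),
    sum_mul_ite_eq' (fun k => X p k) (l+(q:ℕ)) (by omega),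
    sum_mul_ite_eq' (fun k => X p k) (2*l+(q:ℕ)) (by omega),
    sum_mul_ite_eq' (fun k => X p k) (3*l+(q:ℕ)) (by omega),
    sum_mul_ite_eq' (fun k => X p k) (4*l+(q:ℕ)) (by omega),
    sum_mul_ite_eq' (fun k => X p k) (5*l+(q:ℕ)) (by omega)]

end Helpers

/-- If every element of `B(M₁,M₂,M₃)` has rank at least `φ(ℓ)`, then every element of the
feasible set `F(M₁,M₂,M₃)` has rank at least `3ℓ + φ(ℓ)`. -/
theorem Fset_high_rank (l : ℕ) (hl : 1 ≤ l)
    (M1 M2 M3 : Matrix (Fin l) (Fin l) ℝ)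
    (hM1 : M1.PosSemidef) (hM2 : M2.PosSemidef) (hM3 : M3.PosSemidef)
    (hB : ∀ X, Bset l M1 M2 M3 X → phi l ≤ X.rank) :
    ∀ X, Fset l M1 M2 M3 X → 3*l + phi l ≤ X.rank := by
  intro X hX
  obtain ⟨hpsd, hId, hz1, hz2, hz3, hz4, hd1, hd2, hd3, hV⟩ := hX
  have hsym : ∀ i j, X i j = X j i := fun i j => by
    simpa using congrFun (congrFun hpsd.1 j) i
  have hXmk : ∀ (a a' b b' : ℕ) (ha : a < 6*l) (ha' : a' < 6*l) (hb : b < 6*l) (hb' : b' < 6*l),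
      a = a' → b = b' → X ⟨a, ha⟩ ⟨b, hb⟩ = X ⟨a', ha'⟩ ⟨b', hb'⟩ := by
    intro a a' b b' ha ha' hb hb' h1 h2
    subst h1; subst h2; rfl
  -- X * V = 0
  have hXV : X * Vmat l = 0 := by
    obtain ⟨A, hA⟩ : ∃ A : Matrix (Fin (6*l)) (Fin (6*l)) ℝ, X = Aᴴ * A := by
      open scoped MatrixOrder in exact CStarAlgebra.nonneg_iff_eq_star_mul_self.mp hpsd.nonneg
    have h1 : (A * Vmat l)ᴴ * (A * Vmat l) = 0 := by
      have e : (A * Vmat l)ᴴ * (A * Vmat l) = (Vmat l)ᵀ * X * Vmat l := by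
        rw [Matrix.conjTranspose_mul, hA, Matrix.conjTranspose_eq_transpose_of_trivial]
        simp only [Matrix.mul_assoc]
      rw [e, hV]
    have h2 : A * Vmat l = 0 := Matrix.conjTranspose_mul_self_eq_zero.mp h1
    rw [hA, Matrix.mul_assoc, h2, Matrix.mul_zero]
  have hrel : ∀ (i : Fin (6*l)) (j : Fin l),
      -X i ⟨(j:ℕ), by omega⟩ - X i ⟨l+(j:ℕ), by omega⟩ - X i ⟨2*l+(j:ℕ), by omega⟩
        + X i ⟨3*l+(j:ℕ), by omega⟩ + X i ⟨4*l+(j:ℕ), by omega⟩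
        - X i ⟨5*l+(j:ℕ), by omega⟩ = 0 := by
    intro i j
    rw [← mul_Vmat_apply X i j, hXV]
    simp
  have hIdn : ∀ (a b : ℕ) (ha : a < 3*l) (hb : b < 3*l),
      X ⟨a, by omega⟩ ⟨b, by omega⟩ = if a = b then (1:ℝ) else 0 := by
    intro a b ha hb
    have h := hId ⟨a, ha⟩ ⟨b, hb⟩
    rcases eq_or_ne a b with he | he
    · rw [if_pos (Fin.ext he)] at h; rw [if_pos he]; exact h
    · rw [if_neg (fun hh => he (congrArg Fin.val hh))] at h; rw [if_neg he]; exact h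
  -- the three diagonal identity facts for the lower-left block
  have f1 : ∀ (a b : ℕ) (ha : a < l) (hb : b < l),
      X ⟨a, by omega⟩ ⟨3*l+b, by omega⟩ = if a = b then (1:ℝ) else 0 := by
    intro a b ha hb
    have h := hrel ⟨a, by omega⟩ ⟨b, hb⟩
    have h1 : X ⟨a, by omega⟩ ⟨b, by omega⟩ = if a = b then (1:ℝ) else 0 :=
      hIdn _ _ (by omega) (by omega)
    have h2 : X ⟨a, by omega⟩ ⟨l+b, by omega⟩ = 0 := by
      rw [hIdn _ _ (by omega) (by omega), if_neg (by omega)]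
    have h3 : X ⟨a, by omega⟩ ⟨2*l+b, by omega⟩ = 0 := by
      rw [hIdn _ _ (by omega) (by omega), if_neg (by omega)]
    have h4 : X ⟨a, by omega⟩ ⟨4*l+b, by omega⟩ = 0 := by
      rw [hsym]; exact hz2 ⟨b, hb⟩ ⟨a, ha⟩
    have h5 : X ⟨a, by omega⟩ ⟨5*l+b, by omega⟩ = 0 := by
      rw [hsym]; exact hz4 ⟨b, hb⟩ ⟨a, by omega⟩
    linarith [h, h1, h2, h3, h4, h5]
  have f2 : ∀ (a b : ℕ) (ha : a < l) (hb : b < l),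
      X ⟨l+a, by omega⟩ ⟨4*l+b, by omega⟩ = if a = b then (1:ℝ) else 0 := by
    intro a b ha hb
    have h := hrel ⟨l+a, by omega⟩ ⟨b, hb⟩
    have h1 : X ⟨l+a, by omega⟩ ⟨b, by omega⟩ = 0 := by
      rw [hIdn _ _ (by omega) (by omega), if_neg (by omega)]
    have h2 : X ⟨l+a, by omega⟩ ⟨l+b, by omega⟩ = if a = b then (1:ℝ) else 0 := by
      rw [hIdn _ _ (by omega) (by omega)]
      exact if_congr (by omega) rfl rfl
    have h3 : X ⟨l+a, by omega⟩ ⟨2*l+b, by omega⟩ = 0 := by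
      rw [hIdn _ _ (by omega) (by omega), if_neg (by omega)]
    have h4 : X ⟨l+a, by omega⟩ ⟨3*l+b, by omega⟩ = 0 := by
      rw [hsym]; exact hz1 ⟨b, hb⟩ ⟨a, by omega⟩
    have h5 : X ⟨l+a, by omega⟩ ⟨5*l+b, by omega⟩ = 0 := by
      rw [hsym]; exact hz4 ⟨b, hb⟩ ⟨l+a, by omega⟩
    linarith [h, h1, h2, h3, h4, h5]
  have f3 : ∀ (a b : ℕ) (ha : a < l) (hb : b < l),
      X ⟨2*l+a, by omega⟩ ⟨5*l+b, by omega⟩ = -(if a = b then (1:ℝ) else 0) := by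
    intro a b ha hb
    have h := hrel ⟨2*l+a, by omega⟩ ⟨b, hb⟩
    have h1 : X ⟨2*l+a, by omega⟩ ⟨b, by omega⟩ = 0 := by
      rw [hIdn _ _ (by omega) (by omega), if_neg (by omega)]
    have h2 : X ⟨2*l+a, by omega⟩ ⟨l+b, by omega⟩ = 0 := by
      rw [hIdn _ _ (by omega) (by omega), if_neg (by omega)]
    have h3 : X ⟨2*l+a, by omega⟩ ⟨2*l+b, by omega⟩ = if a = b then (1:ℝ) else 0 := by
      rw [hIdn _ _ (by omega) (by omega)]
      exact if_congr (by omega) rfl rfl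
    have h4 : X ⟨2*l+a, by omega⟩ ⟨3*l+b, by omega⟩ = 0 := by
      rw [hsym,
        hXmk (3*l+b) (3*l+b) (2*l+a) (l+(l+a))
          (by omega) (by omega) (by omega) (by omega) rfl (by ring)]
      exact hz1 ⟨b, hb⟩ ⟨l+a, by omega⟩
    have h5 : X ⟨2*l+a, by omega⟩ ⟨4*l+b, by omega⟩ = 0 := by
      rw [hsym]; exact hz3 ⟨b, hb⟩ ⟨a, ha⟩
    linarith [h, h1, h2, h3, h4, h5]
  -- full description of the lower-left block
  have key : ∀ (a b : ℕ) (ha : a < 3*l) (hb : b < 3*l),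
      X ⟨3*l+a, by omega⟩ ⟨b, by omega⟩
        = if a = b then (if a < 2*l then (1:ℝ) else -1) else 0 := by
    intro a b ha hb
    rcases Nat.lt_or_ge a l with ha1 | ha1
    · rcases Nat.lt_or_ge b l with hb1 | hb1
      · rw [hsym]
        refine (f1 b a hb1 ha1).trans ?_
        rw [show (if a < 2*l then (1:ℝ) else -1) = 1 from if_pos (by omega)]
        exact if_congr (by omega) rfl rfl
      · rw [hXmk (3*l+a) (3*l+a) b (l+(b-l)) (by omega) (by omega) (by omega) (by omega)
          rfl (by omega), if_neg (by omega)]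
        exact hz1 ⟨a, ha1⟩ ⟨b-l, by omega⟩
    · rcases Nat.lt_or_ge a (2*l) with ha2 | ha2
      · rcases Nat.lt_or_ge b l with hb1 | hb1
        · rw [hXmk (3*l+a) (4*l+(a-l)) b b (by omega) (by omega) (by omega) (by omega)
            (by omega) rfl, if_neg (by omega)]
          exact hz2 ⟨a-l, by omega⟩ ⟨b, hb1⟩
        · rcases Nat.lt_or_ge b (2*l) with hb2 | hb2
          · rw [hXmk (3*l+a) (4*l+(a-l)) b (l+(b-l)) (by omega) (by omega) (by omega)
              (by omega) (by omega) (by omega), hsym]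
            refine (f2 (b-l) (a-l) (by omega) (by omega)).trans ?_
            rw [show (if a < 2*l then (1:ℝ) else -1) = 1 from if_pos (by omega)]
            exact if_congr (by omega) rfl rfl
          · rw [hXmk (3*l+a) (4*l+(a-l)) b (2*l+(b-2*l)) (by omega) (by omega) (by omega)
              (by omega) (by omega) (by omega), if_neg (by omega)]
            exact hz3 ⟨a-l, by omega⟩ ⟨b-2*l, by omega⟩
      · rcases Nat.lt_or_ge b (2*l) with hb2 | hb2
        · rw [hXmk (3*l+a) (5*l+(a-2*l)) b b (by omega) (by omega) (by omega) (by omega)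
            (by omega) rfl, if_neg (by omega)]
          exact hz4 ⟨a-2*l, by omega⟩ ⟨b, hb2⟩
        · rw [hXmk (3*l+a) (5*l+(a-2*l)) b (2*l+(b-2*l)) (by omega) (by omega) (by omega)
            (by omega) (by omega) (by omega), hsym]
          refine (f3 (b-2*l) (a-2*l) (by omega) (by omega)).trans ?_
          rw [show (if a < 2*l then (1:ℝ) else -1) = -1 from if_neg (by omega)]
          rcases eq_or_ne a b with rfl | h
          · rw [if_pos rfl, if_pos (by omega)]
          · rw [if_neg (by omega), if_neg h]
            norm_num
  -- block world
  obtain ⟨S, hSapp⟩ : ∃ S : Matrix (Fin (3*l)) (Fin (3*l)) ℝ, ∀ p q,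
      S p q = X ⟨3*l+(p:ℕ), by omega⟩ ⟨3*l+(q:ℕ), by omega⟩ - (if p = q then (1:ℝ) else 0) :=
    ⟨Matrix.of (fun p q =>
      X ⟨3*l+(p:ℕ), by omega⟩ ⟨3*l+(q:ℕ), by omega⟩ - (if p = q then (1:ℝ) else 0)),
      fun p q => rfl⟩
  have hSapp' : ∀ (p : Fin (3*l)) (c : ℕ) (hc : c < 3*l) (hc6 : 3*l + c < 6*l),
      S p ⟨c, hc⟩ = X ⟨3*l+(p:ℕ), by omega⟩ ⟨3*l+c, hc6⟩ - (if (p:ℕ) = c then (1:ℝ) else 0) := by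
    intro p c hc hc6
    rcases eq_or_ne (p:ℕ) c with h | h
    · rw [hSapp, if_pos (Fin.ext h), if_pos h]
    · rw [hSapp, if_neg (fun hh => h (congrArg Fin.val hh)), if_neg h]
  have hSapp'' : ∀ (r c : ℕ) (hr : r < 3*l) (hc : c < 3*l) (hr6 : 3*l + r < 6*l)
      (hc6 : 3*l + c < 6*l),
      S ⟨r, hr⟩ ⟨c, hc⟩ = X ⟨3*l+r, hr6⟩ ⟨3*l+c, hc6⟩ - (if r = c then (1:ℝ) else 0) := by
    intro r c hr hc hr6 hc6
    exact hSapp' ⟨r, hr⟩ c hc hc6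
  set J : Matrix (Fin (3*l)) (Fin (3*l)) ℝ :=
    Matrix.diagonal (fun p => if (p:ℕ) < 2*l then (1:ℝ) else -1) with hJdef
  have hJT : Jᵀ = J := Matrix.diagonal_transpose _
  have hJJ : J * J = 1 := by
    rw [hJdef, Matrix.diagonal_mul_diagonal]
    have h : (fun i : Fin (3*l) => (if (i:ℕ) < 2*l then (1:ℝ) else -1)
        * (if (i:ℕ) < 2*l then (1:ℝ) else -1)) = fun _ => 1 := by
      funext i
      split_ifs <;> norm_num
    rw [h, Matrix.diagonal_one]
  set e6 : Fin (3*l) ⊕ Fin (3*l) ≃ Fin (6*l) :=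
    finSumFinEquiv.trans (finCongr (by ring)) with he6def
  have he6l : ∀ p, e6 (Sum.inl p) = (⟨(p:ℕ), by omega⟩ : Fin (6*l)) := fun p =>
    Fin.ext (by simp [he6def])
  have he6r : ∀ p, e6 (Sum.inr p) = (⟨3*l+(p:ℕ), by omega⟩ : Fin (6*l)) := fun p =>
    Fin.ext (by simp [he6def]; omega)
  have hX' : X.submatrix ⇑e6 ⇑e6 = Matrix.fromBlocks 1 J J (S + 1) := by
    ext p q
    rcases p with p | p <;> rcases q with q | q <;>
      simp only [Matrix.submatrix_apply, he6l, he6r, Matrix.fromBlocks_apply₁₁,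
        Matrix.fromBlocks_apply₁₂, Matrix.fromBlocks_apply₂₁, Matrix.fromBlocks_apply₂₂]
    · rw [Matrix.one_apply]
      exact hId p q
    · rw [hsym]
      refine (key (q:ℕ) (p:ℕ) (by omega) (by omega)).trans ?_
      rw [hJdef]
      rw [Matrix.diagonal_apply]
      rcases eq_or_ne p q with rfl | h
      · rw [if_pos (by omega), if_pos rfl]
      · rw [if_neg (by omega), if_neg h]
    · refine (key (p:ℕ) (q:ℕ) (by omega) (by omega)).trans ?_
      rw [hJdef]
      rw [Matrix.diagonal_apply]
      rcases eq_or_ne p q with rfl | h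
      · rw [if_pos (by omega), if_pos rfl]
      · rw [if_neg (by omega), if_neg h]
    · rw [Matrix.add_apply, hSapp p q, Matrix.one_apply]
      ring
  set T : Matrix (Fin (3*l) ⊕ Fin (3*l)) (Fin (3*l) ⊕ Fin (3*l)) ℝ :=
    Matrix.fromBlocks 1 0 (-J) 1 with hTdef
  have hTt : Tᵀ = Matrix.fromBlocks 1 (-J) 0 1 := by
    rw [hTdef, Matrix.fromBlocks_transpose, Matrix.transpose_one, Matrix.transpose_zero,
      Matrix.transpose_neg, hJT]
  have hcongr : T * X.submatrix ⇑e6 ⇑e6 * Tᵀ = Matrix.fromBlocks 1 0 0 S := by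
    rw [hX', hTt, hTdef, Matrix.fromBlocks_multiply, Matrix.fromBlocks_multiply,
      Matrix.fromBlocks_inj]
    have h1 : (-J) * J = -1 := by rw [Matrix.neg_mul, hJJ]
    refine ⟨?_, ?_, ?_, ?_⟩ <;>
      simp only [h1, Matrix.one_mul, Matrix.mul_one, Matrix.zero_mul, Matrix.mul_zero,
        add_zero, zero_add, neg_add_cancel] <;>
      abel
  have hdetT : IsUnit T.det := by
    rw [hTdef, Matrix.det_fromBlocks_zero₁₂]
    simp
  have hdetTt : IsUnit Tᵀ.det := by rwa [Matrix.det_transpose]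
  have hrank : X.rank = 3*l + S.rank := by
    calc X.rank = (X.submatrix ⇑e6 ⇑e6).rank := (Matrix.rank_submatrix X e6 e6).symm
    _ = (T * X.submatrix ⇑e6 ⇑e6 * Tᵀ).rank := by
        rw [Matrix.rank_mul_eq_left_of_isUnit_det Tᵀ _ hdetTt,
          Matrix.rank_mul_eq_right_of_isUnit_det T _ hdetT]
    _ = 3*l + S.rank := by
        rw [hcongr, rank_fromBlocks_one_zero_zero']
        simp
  have hfb : (Matrix.fromBlocks (1 : Matrix (Fin (3*l)) (Fin (3*l)) ℝ) 0 0 S).PosSemidef := by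
    have h := (hpsd.submatrix ⇑e6).mul_mul_conjTranspose_same T
    rw [Matrix.conjTranspose_eq_transpose_of_trivial, hcongr] at h
    exact h
  have hSpsd : S.PosSemidef := by
    have h := hfb.submatrix Sum.inr
    have hs : S = (Matrix.fromBlocks (1 : Matrix (Fin (3*l)) (Fin (3*l)) ℝ) 0 0 S).submatrix
        Sum.inr Sum.inr := by
      ext p q
      simp
    rw [hs]
    exact h
  -- S * W = 0
  have hSW : S * Wmat l = 0 := by
    ext p q
    rw [mul_Wmat_apply, hSapp' p (q:ℕ) (by omega) (by omega),
      hSapp' p (l+(q:ℕ)) (by omega) (by omega), hSapp' p (2*l+(q:ℕ)) (by omega) (by omega),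
      hXmk (3*l+(p:ℕ)) (3*l+(p:ℕ)) (3*l+(l+(q:ℕ))) (4*l+(q:ℕ))
        (by omega) (by omega) (by omega) (by omega) rfl (by ring),
      hXmk (3*l+(p:ℕ)) (3*l+(p:ℕ)) (3*l+(2*l+(q:ℕ))) (5*l+(q:ℕ))
        (by omega) (by omega) (by omega) (by omega) rfl (by ring)]
    have hr := hrel ⟨3*l+(p:ℕ), by omega⟩ q
    have t1 : X ⟨3*l+(p:ℕ), by omega⟩ ⟨(q:ℕ), by omega⟩
        = if (p:ℕ) = (q:ℕ) then (1:ℝ) else 0 := by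
      rw [key (p:ℕ) (q:ℕ) (by omega) (by omega)]
      rcases eq_or_ne (p:ℕ) (q:ℕ) with h | h
      · rw [if_pos h, if_pos h, if_pos (by omega)]
      · rw [if_neg h, if_neg h]
    have t2 : X ⟨3*l+(p:ℕ), by omega⟩ ⟨l+(q:ℕ), by omega⟩
        = if (p:ℕ) = l+(q:ℕ) then (1:ℝ) else 0 := by
      rw [key (p:ℕ) (l+(q:ℕ)) (by omega) (by omega)]
      rcases eq_or_ne (p:ℕ) (l+(q:ℕ)) with h | h
      · rw [if_pos h, if_pos h, if_pos (by omega)]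
      · rw [if_neg h, if_neg h]
    have t3 : X ⟨3*l+(p:ℕ), by omega⟩ ⟨2*l+(q:ℕ), by omega⟩
        = -(if (p:ℕ) = 2*l+(q:ℕ) then (1:ℝ) else 0) := by
      rw [key (p:ℕ) (2*l+(q:ℕ)) (by omega) (by omega)]
      rcases eq_or_ne (p:ℕ) (2*l+(q:ℕ)) with h | h
      · rw [if_pos h, if_pos h, if_neg (by omega)]
      · rw [if_neg h, if_neg h]
        norm_num
    have hz : (0 : Matrix (Fin (3*l)) (Fin l) ℝ) p q = 0 := rfl
    rw [hz]
    linarith [hr, t1, t2, t3]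
  have hSB : Bset l M1 M2 M3 S := by
    refine ⟨hSpsd, ?_, ?_, ?_, ?_⟩
    · intro i j
      refine (hSapp'' (i:ℕ) (j:ℕ) (by omega) (by omega) (by omega) (by omega)).trans ?_
      rw [hd1 i j]
      rcases eq_or_ne i j with rfl | h
      · rw [if_pos rfl, if_pos rfl]
        ring
      · rw [if_neg h, if_neg (fun hh => h (Fin.ext hh))]
        ring
    · intro i j
      refine (hSapp'' (l+(i:ℕ)) (l+(j:ℕ)) (by omega) (by omega) (by omega) (by omega)).trans ?_
      rw [hXmk (3*l+(l+(i:ℕ))) (4*l+(i:ℕ)) (3*l+(l+(j:ℕ))) (4*l+(j:ℕ))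
        (by omega) (by omega) (by omega) (by omega) (by ring) (by ring), hd2 i j]
      rcases eq_or_ne i j with rfl | h
      · rw [if_pos rfl, if_pos rfl]
        ring
      · rw [if_neg h, if_neg (fun hh => h (Fin.ext (by omega)))]
        ring
    · intro i j
      refine (hSapp'' (2*l+(i:ℕ)) (2*l+(j:ℕ)) (by omega) (by omega) (by omega)
        (by omega)).trans ?_
      rw [hXmk (3*l+(2*l+(i:ℕ))) (5*l+(i:ℕ)) (3*l+(2*l+(j:ℕ))) (5*l+(j:ℕ))
        (by omega) (by omega) (by omega) (by omega) (by ring) (by ring), hd3 i j]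
      rcases eq_or_ne i j with rfl | h
      · rw [if_pos rfl, if_pos rfl]
        ring
      · rw [if_neg h, if_neg (fun hh => h (Fin.ext (by omega)))]
        ring
    · rw [Matrix.mul_assoc, hSW, Matrix.mul_zero]
  have hfin := hB S hSB
  rw [hrank]
  exact Nat.add_le_add_left hfin _
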